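/- Let π : ℤ → ℤ be a bijection (not necessarily of finite bandwidth) and suppose there exist i*, j* ∈ ℤ such that { π(i) : i < i* } = { j ∈ ℤ : j < j* }. Let P be the permutation operator of π on ℓ²(ℤ). Then B := Q P Q + (I − Q) is Fredholm and ind(B) = j* − i*. -/

import Mathlib

noncomputable section

/-- `ℓ²(ℤ)`, the Hilbert space of square-summable complex sequences indexed by `ℤ`. -/
abbrev H : Type := lp (fun _ : ℤ => ℂ) 2

/-- A bounded operator on a Hilbert space is Fredholm if its kernel is finite-dimensional
and its range is closed and of finite codimension. -/
def IsFredholm (T : H →L[ℂ] H) : Prop :=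
  FiniteDimensional ℂ (LinearMap.ker (T : H →ₗ[ℂ] H)) ∧
  IsClosed (LinearMap.range (T : H →ₗ[ℂ] H) : Set H) ∧
  FiniteDimensional ℂ (H ⧸ LinearMap.range (T : H →ₗ[ℂ] H))

/-- The Fredholm index `ind(T) = dim ker T − dim coker T`. -/
def fredholmIndex (T : H →L[ℂ] H) : ℤ :=
  (Module.finrank ℂ (LinearMap.ker (T : H →ₗ[ℂ] H)) : ℤ) -
  (Module.finrank ℂ (H ⧸ LinearMap.range (T : H →ₗ[ℂ] H)) : ℤ)

/- ### Auxiliary counting lemmas -/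

private lemma relind_finite {α : Type*} {A B : Set α} (hA : A.Finite) (hB : B.Finite) :
    ((A \ B).ncard : ℤ) - (B \ A).ncard = A.ncard - B.ncard := by
  have h1 := Set.ncard_inter_add_ncard_diff_eq_ncard A B hA
  have h2 := Set.ncard_inter_add_ncard_diff_eq_ncard B A hB
  rw [Set.inter_comm B A] at h2
  omega

private lemma relind_sub {α : Type*} {X Z T : Set α} (hT : T.Finite)
    (h1 : X \ Z ⊆ T) (h2 : Z \ X ⊆ T) :
    ((X \ Z).ncard : ℤ) - (Z \ X).ncard = (X ∩ T).ncard - (Z ∩ T).ncard := by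
  have e1 : X \ Z = (X ∩ T) \ (Z ∩ T) := by
    ext x
    constructor
    · rintro ⟨hx, hz⟩; exact ⟨⟨hx, h1 ⟨hx, hz⟩⟩, fun h => hz h.1⟩
    · rintro ⟨⟨hx, ht⟩, hz⟩; exact ⟨hx, fun h => hz ⟨h, ht⟩⟩
  have e2 : Z \ X = (Z ∩ T) \ (X ∩ T) := by
    ext x
    constructor
    · rintro ⟨hx, hz⟩; exact ⟨⟨hx, h2 ⟨hx, hz⟩⟩, fun h => hz h.1⟩
    · rintro ⟨⟨hx, ht⟩, hz⟩; exact ⟨hx, fun h => hz ⟨h, ht⟩⟩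
  rw [e1, e2, relind_finite (hT.inter_of_right X) (hT.inter_of_right Z)]

private lemma diff_lt_lt (a b : ℤ) :
    {i : ℤ | i < a} \ {i : ℤ | i < b} = Set.Ico b a := by
  ext i
  simp only [Set.mem_diff, Set.mem_setOf_eq, Set.mem_Ico, not_lt]
  tauto

private lemma ncard_Ico_int (a b : ℤ) : (Set.Ico a b).ncard = (b - a).toNat := by
  rw [← Finset.coe_Ico, Set.ncard_coe_finset, Int.card_Ico]

/-- Evaluation at a coordinate, as a continuous linear map on `ℓ²(ℤ)`. -/
private def evalCLM (i : ℤ) : H →L[ℂ] ℂ :=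
  LinearMap.mkContinuous
    { toFun := fun y => y i
      map_add' := by intro a b; simp [lp.coeFn_add]
      map_smul' := by intro c a; simp [lp.coeFn_smul] } 1
    (fun y => by show ‖y i‖ ≤ 1 * ‖y‖; simpa using lp.norm_apply_le_norm (by norm_num) y i)

private lemma evalCLM_apply (i : ℤ) (y : H) : evalCLM i y = y i := rfl

private lemma memℓp_dite (S : Set ℤ) [∀ j : ℤ, Decidable (j ∈ S)] (hS : S.Finite) (f : ∀ j : ℤ, j ∈ S → ℂ) :
    Memℓp (fun j => if h : j ∈ S then f j h else 0) 2 := by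
  apply memℓp_gen
  apply summable_of_ne_finset_zero (s := hS.toFinset)
  intro j hj
  rw [Set.Finite.mem_toFinset] at hj
  simp [hj, Real.zero_rpow, ENNReal.toReal_ofNat]

set_option maxHeartbeats 1000000 in
/-- **Theorem on splitting permutations.** If a (not necessarily banded)
permutation `π` of `ℤ` splits, i.e. `{ π(i) : i < i* } = { j : j < j* }`, then
`B = Q P Q + (I − Q)` is Fredholm with index `j* − i*`. -/
theorem plus_index_of_split_permutation (π : ℤ ≃ ℤ) (istar jstar : ℤ)
    (hsplit : (fun i => π i) '' {i : ℤ | i < istar} = {j : ℤ | j < jstar})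
    (P Q : H →L[ℂ] H)
    (hP : ∀ (x : H) (i : ℤ), P x i = x (π i))
    (hQ : ∀ (x : H) (i : ℤ), Q x i = if 1 ≤ i then x i else 0) :
    IsFredholm (Q ∘L P ∘L Q + (1 - Q)) ∧
    fredholmIndex (Q ∘L P ∘L Q + (1 - Q)) = jstar - istar := by
  classical
  set B : H →L[ℂ] H := Q ∘L P ∘L Q + (1 - Q) with hBdef
  -- pointwise formula for B
  have hB : ∀ (x : H) (i : ℤ), B x i
      = if 1 ≤ i then (if 1 ≤ π i then x (π i) else 0) else x i := by
    intro x i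
    have h1 : (B x : ∀ _ : ℤ, ℂ) i = (Q (P (Q x))) i + (x i - Q x i) := by
      simp only [hBdef, ContinuousLinearMap.add_apply, ContinuousLinearMap.coe_comp',
        Function.comp_apply, ContinuousLinearMap.sub_apply, ContinuousLinearMap.one_apply,
        lp.coeFn_add, Pi.add_apply, lp.coeFn_sub, Pi.sub_apply]
    rw [h1, hQ, hP, hQ, hQ]
    by_cases h : 1 ≤ i <;> simp [h]
  -- the relevant sets
  set U : Set ℤ := {i : ℤ | i < 1} with hUdef
  set V : Set ℤ := {i : ℤ | i < istar} with hVdef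
  set W : Set ℤ := {j : ℤ | j < jstar} with hWdef
  set A : Set ℤ := (fun i => π i) ⁻¹' U with hAdef
  have hVA : V = (fun i => π i) ⁻¹' W := by
    rw [← hsplit, Set.preimage_image_eq _ π.injective]
  have hpre_ncard : ∀ s : Set ℤ, ((fun i => π i) ⁻¹' s).ncard = s.ncard := by
    intro s
    have : (fun i => π i) ⁻¹' s = (fun j => π.symm j) '' s := by
      rw [Equiv.image_eq_preimage_symm π.symm s, Equiv.symm_symm]
    rw [this, Set.ncard_image_of_injective _ π.symm.injective]
  have hpre_fin : ∀ s : Set ℤ, s.Finite → ((fun i => π i) ⁻¹' s).Finite := by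
    intro s hs
    exact hs.preimage (π.injective.injOn)
  -- the finite "window"
  set T : Set ℤ := ((U \ V) ∪ (V \ U)) ∪ ((A \ V) ∪ (V \ A)) with hTdef
  have hAVd : A \ V = (fun i => π i) ⁻¹' (U \ W) := by
    rw [hAdef, hVA, Set.preimage_diff]
  have hVAd : V \ A = (fun i => π i) ⁻¹' (W \ U) := by
    rw [hAdef, hVA, Set.preimage_diff]
  have hTfin : T.Finite := by
    refine (Set.Finite.union (Set.Finite.union ?_ ?_) (Set.Finite.union ?_ ?_))
    · rw [hUdef, hVdef, diff_lt_lt]; exact Set.finite_Ico _ _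
    · rw [hUdef, hVdef, diff_lt_lt]; exact Set.finite_Ico _ _
    · rw [hAVd, hUdef, hWdef, diff_lt_lt]; exact hpre_fin _ (Set.finite_Ico _ _)
    · rw [hVAd, hUdef, hWdef, diff_lt_lt]; exact hpre_fin _ (Set.finite_Ico _ _)
  have hUA_T : U \ A ⊆ T := by
    intro x hx
    by_cases hv : x ∈ V
    · exact Or.inr (Or.inr ⟨hv, hx.2⟩)
    · exact Or.inl (Or.inl ⟨hx.1, hv⟩)
  have hAU_T : A \ U ⊆ T := by
    intro x hx
    by_cases hv : x ∈ V
    · exact Or.inl (Or.inr ⟨hv, hx.2⟩)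
    · exact Or.inr (Or.inl ⟨hx.1, hv⟩)
  have hUV_T : U \ V ⊆ T := fun x hx => Or.inl (Or.inl hx)
  have hVU_T : V \ U ⊆ T := fun x hx => Or.inl (Or.inr hx)
  have hAV_T : A \ V ⊆ T := fun x hx => Or.inr (Or.inl hx)
  have hVA_T : V \ A ⊆ T := fun x hx => Or.inr (Or.inr hx)
  have r1 := relind_sub hTfin hUA_T hAU_T
  have r2 := relind_sub hTfin hUV_T hVU_T
  have r3 := relind_sub hTfin hAV_T hVA_T
  have r2' : ((U \ V).ncard : ℤ) - (V \ U).ncard = 1 - istar := by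
    rw [hUdef, hVdef, diff_lt_lt, diff_lt_lt, ncard_Ico_int, ncard_Ico_int]
    omega
  have r3' : ((A \ V).ncard : ℤ) - (V \ A).ncard = 1 - jstar := by
    rw [hAVd, hVAd, hpre_ncard, hpre_ncard, hUdef, hWdef, diff_lt_lt, diff_lt_lt,
      ncard_Ico_int, ncard_Ico_int]
    omega
  have hmain : ((U \ A).ncard : ℤ) - (A \ U).ncard = jstar - istar := by omega
  -- kernel and cokernel index sets
  set S : Set ℤ := {j : ℤ | 1 ≤ j ∧ π.symm j ≤ 0} with hSdef
  set D : Set ℤ := {i : ℤ | 1 ≤ i ∧ π i ≤ 0} with hDdef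
  have hSeq : S = (fun i => π i) '' (U \ A) := by
    ext j
    simp only [hSdef, Set.mem_setOf_eq, Set.mem_image, Set.mem_diff, hUdef, hAdef,
      Set.mem_preimage, Set.mem_setOf_eq]
    constructor
    · rintro ⟨h1, h2⟩
      exact ⟨π.symm j, ⟨by omega, by simp; omega⟩, by simp⟩
    · rintro ⟨i, ⟨hi1, hi2⟩, rfl⟩
      simp only [Equiv.symm_apply_apply]
      omega
  have hDeq : D = A \ U := by
    ext i
    simp only [hDdef, Set.mem_setOf_eq, Set.mem_diff, hAdef, Set.mem_preimage, hUdef,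
      Set.mem_setOf_eq]
    omega
  have hSfin : S.Finite := by
    rw [hSeq]; exact (hTfin.subset hUA_T).image _
  have hDfin : D.Finite := by
    rw [hDeq]; exact hTfin.subset hAU_T
  have hScard : (S.ncard : ℤ) - D.ncard = jstar - istar := by
    rw [hSeq, hDeq, Set.ncard_image_of_injective _ π.injective]
    exact hmain
  -- membership facts about S and D
  have hS_not : ∀ j : ℤ, 1 ≤ j → π.symm j ≥ 1 → j ∉ S := by
    intro j h1 h2 hj; rw [hSdef] at hj; exact absurd hj.2 (by omega)
  -- characterization of the kernel
  have hker : ∀ x : H, x ∈ LinearMap.ker (B : H →ₗ[ℂ] H) ↔ ∀ j, j ∉ S → x j = 0 := by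
    intro x
    rw [LinearMap.mem_ker, ContinuousLinearMap.coe_coe]
    constructor
    · intro h j hj
      have hcoe : ∀ i : ℤ, B x i = 0 := by
        intro i; rw [h]; simp [lp.coeFn_zero]
      by_cases h1 : 1 ≤ j
      · have h2 : 1 ≤ π.symm j := by
          by_contra hc
          exact hj ⟨h1, by omega⟩
        have := hcoe (π.symm j)
        rw [hB] at this
        simpa [h2, h1, Equiv.apply_symm_apply] using this
      · have := hcoe j
        rw [hB] at this
        simpa [h1] using this
    · intro h
      apply lp.ext
      funext i
      rw [lp.coeFn_zero, Pi.zero_apply, hB]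
      by_cases h1 : 1 ≤ i
      · by_cases h2 : 1 ≤ π i
        · have : π i ∉ S := hS_not _ h2 (by simp [Equiv.symm_apply_apply]; omega)
          simp [h1, h2, h _ this]
        · simp [h1, h2]
      · have : i ∉ S := fun hi => h1 hi.1
        simp [h1, h _ this]
  -- characterization of the range
  have hrange : ∀ y : H, y ∈ LinearMap.range (B : H →ₗ[ℂ] H) ↔ ∀ i ∈ D, y i = 0 := by
    intro y
    constructor
    · rintro ⟨x, rfl⟩ i hi
      rw [hDdef] at hi
      have h1 : (1:ℤ) ≤ i := hi.1
      have h2 : ¬ (1:ℤ) ≤ π i := by have := hi.2; omega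
      rw [ContinuousLinearMap.coe_coe, hB]
      simp [h1, h2]
    · intro hy
      -- construct a preimage
      set g : ℤ → ℂ := fun j => if j ∈ S then 0 else y (if 1 ≤ j then π.symm j else j) with hgdef
      have hgmem : Memℓp g 2 := by
        apply memℓp_gen
        have hys : Summable (fun i : ℤ => ‖y i‖ ^ (2:ℝ)) := by
          have := (lp.memℓp y).summable (p := 2) (by norm_num)
          simpa [ENNReal.toReal_ofNat] using this
        have h2 : ENNReal.toReal 2 = (2:ℝ) := by simp
        rw [h2]
        rw [← summable_subtype_and_compl (s := S)]
        constructor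
        · apply summable_of_ne_finset_zero (s := ∅)
          intro j _
          have : g (j : ℤ) = 0 := by rw [hgdef]; simp [j.2]
          simp [this, Real.zero_rpow]
        · have hι : Function.Injective
              (fun j : ↥(Sᶜ) => if 1 ≤ (j:ℤ) then π.symm j else (j:ℤ)) := by
            rintro ⟨a, ha⟩ ⟨b, hb⟩ hab
            have ha' : a ∉ S := ha
            have hb' : b ∉ S := hb
            simp only at hab
            have key : ∀ c : ℤ, c ∉ S → 1 ≤ c → 1 ≤ π.symm c := by
              intro c hc h1
              by_contra hcon
              exact hc ⟨h1, by omega⟩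
            by_cases h1 : 1 ≤ a <;> by_cases h2 : 1 ≤ b
            · rw [if_pos h1, if_pos h2] at hab
              exact Subtype.ext (π.symm.injective hab)
            · rw [if_pos h1, if_neg h2] at hab
              have := key a ha' h1
              omega
            · rw [if_neg h1, if_pos h2] at hab
              have := key b hb' h2
              omega
            · rw [if_neg h1, if_neg h2] at hab
              exact Subtype.ext hab
          have := hys.comp_injective hι
          refine this.congr ?_
          rintro ⟨j, hj⟩
          have hj' : j ∉ S := hj
          simp only [Function.comp_apply, hgdef, if_neg hj']
      refine ⟨(⟨g, hgmem⟩ : H), ?_⟩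
      apply lp.ext
      funext i
      have hgi : ∀ j : ℤ, ((⟨g, hgmem⟩ : H) : ∀ _ : ℤ, ℂ) j = g j := fun _ => rfl
      rw [ContinuousLinearMap.coe_coe, hB]
      by_cases h1 : 1 ≤ i
      · by_cases h2 : 1 ≤ π i
        · have hnot : π i ∉ S := hS_not _ h2 (by simp [Equiv.symm_apply_apply]; omega)
          rw [if_pos h1, if_pos h2, hgi, hgdef]
          simp [hnot, h2, Equiv.symm_apply_apply]
        · have hiD : i ∈ D := by rw [hDdef]; exact ⟨h1, by omega⟩
          rw [if_pos h1, if_neg h2]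
          exact (hy i hiD).symm
      · have hnot : i ∉ S := fun hi => h1 hi.1
        rw [if_neg h1, hgi, hgdef]
        simp [hnot, h1]
  -- Fintype instances
  haveI : Fintype ↥S := hSfin.fintype
  haveI : Fintype ↥D := hDfin.fintype
  -- the kernel is isomorphic to S → ℂ
  have hSmem : ∀ (f : ↥S → ℂ), Memℓp (fun j => if h : j ∈ S then f ⟨j, h⟩ else 0) 2 :=
    fun f => memℓp_dite S hSfin (fun j h => f ⟨j, h⟩)
  let kmap : (LinearMap.ker (B : H →ₗ[ℂ] H)) →ₗ[ℂ] (↥S → ℂ) :=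
    { toFun := fun x j => (x : H) j
      map_add' := by
        intro a b; funext j
        simp [lp.coeFn_add]
      map_smul' := by
        intro c a; funext j
        simp [lp.coeFn_smul] }
  have hkbij : Function.Bijective kmap := by
    constructor
    · rintro ⟨x, hx⟩ ⟨z, hz⟩ hxy
      rw [hker] at hx hz
      apply Subtype.ext
      apply lp.ext
      funext j
      by_cases hj : j ∈ S
      · exact congrFun hxy ⟨j, hj⟩
      · rw [hx j hj, hz j hj]
    · intro f
      set x : H := ⟨fun j => if h : j ∈ S then f ⟨j, h⟩ else 0, hSmem f⟩ with hxdef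
      have hx : ∀ j : ℤ, x j = if h : j ∈ S then f ⟨j, h⟩ else 0 := fun _ => rfl
      have hxker : x ∈ LinearMap.ker (B : H →ₗ[ℂ] H) := by
        rw [hker]
        intro j hj
        rw [hx, dif_neg hj]
      exact ⟨⟨x, hxker⟩, by funext j; simp [kmap, hx, j.2]⟩
  let keq : (LinearMap.ker (B : H →ₗ[ℂ] H)) ≃ₗ[ℂ] (↥S → ℂ) := LinearEquiv.ofBijective kmap hkbij
  haveI hfinker : FiniteDimensional ℂ (LinearMap.ker (B : H →ₗ[ℂ] H)) :=
    Module.Finite.equiv keq.symm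
  have hrank_ker : Module.finrank ℂ (LinearMap.ker (B : H →ₗ[ℂ] H)) = S.ncard := by
    rw [keq.finrank_eq, Module.finrank_pi, ← Nat.card_coe_set_eq, Nat.card_eq_fintype_card]
  -- the range is closed
  have hclosed : IsClosed (LinearMap.range (B : H →ₗ[ℂ] H) : Set H) := by
    have : (LinearMap.range (B : H →ₗ[ℂ] H) : Set H) = ⋂ (i : ℤ) (_ : i ∈ D), (evalCLM i) ⁻¹' {0} := by
      ext y
      simp only [SetLike.mem_coe, hrange, Set.mem_iInter, Set.mem_preimage,
        Set.mem_singleton_iff, evalCLM_apply]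
    rw [this]
    exact isClosed_biInter (fun i _ => isClosed_singleton.preimage (evalCLM i).continuous)
  -- the cokernel is isomorphic to D → ℂ
  let Φ : H →ₗ[ℂ] (↥D → ℂ) :=
    { toFun := fun y i => y (i : ℤ)
      map_add' := by intro a b; funext i; simp [lp.coeFn_add]
      map_smul' := by intro c a; funext i; simp [lp.coeFn_smul] }
  have hΦrange : LinearMap.range (B : H →ₗ[ℂ] H) = LinearMap.ker Φ := by
    ext y
    rw [LinearMap.mem_ker, hrange]
    constructor
    · intro h; funext i; exact h i i.2
    · intro h i hi; exact congrFun h ⟨i, hi⟩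
  have hΦsurj : Function.Surjective Φ := by
    intro f
    refine ⟨⟨fun j => if h : j ∈ D then f ⟨j, h⟩ else 0, memℓp_dite D hDfin _⟩, ?_⟩
    funext i
    simp only [Φ, LinearMap.coe_mk, AddHom.coe_mk]
    exact dif_pos i.2
  let ceq : (H ⧸ LinearMap.range (B : H →ₗ[ℂ] H)) ≃ₗ[ℂ] (↥D → ℂ) :=
    (Submodule.quotEquivOfEq _ _ hΦrange).trans (Φ.quotKerEquivOfSurjective hΦsurj)
  haveI hfincoker : FiniteDimensional ℂ (H ⧸ LinearMap.range (B : H →ₗ[ℂ] H)) :=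
    Module.Finite.equiv ceq.symm
  have hrank_coker : Module.finrank ℂ (H ⧸ LinearMap.range (B : H →ₗ[ℂ] H)) = D.ncard := by
    rw [ceq.finrank_eq, Module.finrank_pi, ← Nat.card_coe_set_eq, Nat.card_eq_fintype_card]
  refine ⟨⟨hfinker, hclosed, hfincoker⟩, ?_⟩
  rw [fredholmIndex, hrank_ker, hrank_coker]
  exact hScard
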